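/- There exists a universal constant c > 0 such that for all n ≥ 1, all ε with 1/n ≤ ε ≤ 1/2, and every nonempty subset A ⊆ L_mid with |A| = σ·2^n: E_{x uniform in A}[score↓(x,A)] ≥ c·ε⁸·σ·√n / √(ln(1/ε)). -/

import Mathlib

open Finset

/-- The Hamming weight `‖x‖₁` of `x ∈ {0,1}^n`. -/
def wt {n : ℕ} (x : Fin n → Bool) : ℕ :=
  (Finset.univ.filter (fun i => x i = true)).card

/-- The Hamming distance `‖x − y‖₁`. -/
def hamm {n : ℕ} (x y : Fin n → Bool) : ℕ :=
  (Finset.univ.filter (fun i => x i ≠ y i)).card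

/-- The parameter `d = d(n,ε) = 2⌈√(2n·ln(100/ε))⌉`. -/
noncomputable def dPar (n : ℕ) (ε : ℝ) : ℕ :=
  2 * ⌈Real.sqrt (2 * n * Real.log (100 / ε))⌉₊

open Classical in
/-- The middle layers `L_mid = {x : (n−d)/2 ≤ ‖x‖₁ ≤ (n+d)/2}`. -/
noncomputable def Lmid (n : ℕ) (ε : ℝ) : Finset (Fin n → Bool) :=
  Finset.univ.filter (fun x =>
    ((n : ℝ) - dPar n ε) / 2 ≤ (wt x : ℝ) ∧ (wt x : ℝ) ≤ ((n : ℝ) + dPar n ε) / 2)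

/-- The `j`-th point (from the bottom) of the path from `0^n` to `1^n` determined by the
permutation `π`: its ones are exactly in positions `π(0),…,π(j−1)`. -/
def pathPoint {n : ℕ} (π : Equiv.Perm (Fin n)) (j : ℕ) : Fin n → Bool :=
  fun i => decide ((π.symm i : ℕ) < j)

/-- The indices `j` of the points of the path `π` lying in the middle layers `L_mid`. -/
noncomputable def pmidIdx (n : ℕ) (ε : ℝ) (π : Equiv.Perm (Fin n)) : Finset ℕ :=
  (Finset.range (n + 1)).filter (fun j => pathPoint π j ∈ Lmid n ε)

open Classical in
/-- `dens↓_k(x,A)`: the probability that a uniformly random `y ≼ x` with `‖x−y‖₁ = k`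
lies in `A` (if `k ≤ ‖x‖₁`, and `0` otherwise). -/
noncomputable def densDown {n : ℕ} (x : Fin n → Bool) (A : Finset (Fin n → Bool)) (k : ℕ) : ℝ :=
  if k ≤ wt x then
    ((A.filter (fun y => (∀ i, y i ≤ x i) ∧ hamm y x = k)).card : ℝ) / ((wt x).choose k : ℝ)
  else 0

open Classical in
/-- `dens↑_k(x,A)`: the probability that a uniformly random `y ≽ x` with `‖y−x‖₁ = k`
lies in `A` (if `k ≤ n − ‖x‖₁`, and `0` otherwise). -/
noncomputable def densUp {n : ℕ} (x : Fin n → Bool) (A : Finset (Fin n → Bool)) (k : ℕ) : ℝ :=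
  if k ≤ n - wt x then
    ((A.filter (fun y => (∀ i, x i ≤ y i) ∧ hamm x y = k)).card : ℝ) / ((n - wt x).choose k : ℝ)
  else 0

/-- `score↓(x,A) = Σ_{k=0}^n dens↓_k(x,A)`. -/
noncomputable def scoreDown {n : ℕ} (x : Fin n → Bool) (A : Finset (Fin n → Bool)) : ℝ :=
  ∑ k ∈ Finset.range (n + 1), densDown x A k

/-- `score↑(x,A) = Σ_{k=1}^n dens↑_k(x,A)`. -/
noncomputable def scoreUp {n : ℕ} (x : Fin n → Bool) (A : Finset (Fin n → Bool)) : ℝ :=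
  ∑ k ∈ Finset.Icc 1 n, densUp x A k

section AuxCount

variable {n : ℕ}

lemma wt_le (x : Fin n → Bool) : wt x ≤ n := by
  classical
  simpa [wt] using Finset.card_filter_le Finset.univ (fun i => x i = true)

lemma wt_mono {x y : Fin n → Bool} (h : ∀ i, x i ≤ y i) : wt x ≤ wt y := by
  classical
  apply Finset.card_le_card
  intro i hi
  simp only [Finset.mem_filter, Finset.mem_univ, true_and] at hi ⊢
  exact Bool.le_iff_imp.mp (h i) hi

lemma hamm_eq_of_le {x y : Fin n → Bool} (h : ∀ i, x i ≤ y i) :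
    hamm x y = wt y - wt x := by
  classical
  have hsub : (Finset.univ.filter (fun i => x i = true)) ⊆
      (Finset.univ.filter (fun i => y i = true)) := by
    intro i hi
    simp only [Finset.mem_filter, Finset.mem_univ, true_and] at hi ⊢
    exact Bool.le_iff_imp.mp (h i) hi
  have : (Finset.univ.filter (fun i => x i ≠ y i)) =
      (Finset.univ.filter (fun i => y i = true)) \
        (Finset.univ.filter (fun i => x i = true)) := by
    ext i
    simp only [Finset.mem_filter, Finset.mem_univ, true_and, Finset.mem_sdiff]
    have := h i
    revert this
    cases x i <;> cases y i <;> simp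
  rw [hamm, this, Finset.card_sdiff_of_subset hsub]
  rfl

lemma card_filter_comp_perm {α : Type*} [Fintype α] [DecidableEq α]
    (π : Equiv.Perm α) (p : α → Prop) [DecidablePred p] :
    (Finset.univ.filter fun a => p (π a)).card = (Finset.univ.filter p).card := by
  rw [Finset.card_filter, Finset.card_filter]
  exact Fintype.sum_equiv π _ _ (fun a => rfl)

lemma card_val_filter (p : ℕ → Prop) [DecidablePred p] :
    (Finset.univ.filter fun a : Fin n => p (a : ℕ)).card
      = ((Finset.range n).filter p).card := by
  rw [Finset.card_filter, Fin.sum_univ_eq_sum_range (fun i => if p i then 1 else 0),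
    ← Finset.card_filter]

lemma card_perm_comp_zero {α κ : Type*} [Fintype α] [DecidableEq α] [Fintype κ] [DecidableEq κ]
    (g f : α → κ) (π : Equiv.Perm α) (hπ : g ∘ π = f) (k : κ) :
    (Finset.univ.filter fun a => g a = k).card = (Finset.univ.filter fun a => f a = k).card := by
  have h : ∀ a, g (π a) = f a := fun a => congrFun hπ a
  calc (Finset.univ.filter fun a => g a = k).card
      = (Finset.univ.filter fun a => g (π a) = k).card := (card_filter_comp_perm π _).symm
    _ = (Finset.univ.filter fun a => f a = k).card := by simp only [h]

lemma card_perm_comp {α κ : Type*} [Fintype α] [DecidableEq α] [Fintype κ] [DecidableEq κ]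
    (g f : α → κ)
    (h : ∀ k, (Finset.univ.filter fun a => g a = k).card
      = (Finset.univ.filter fun a => f a = k).card) :
    (Finset.univ.filter fun π : Equiv.Perm α => g ∘ π = f).card
      = ∏ k, Nat.factorial (Finset.univ.filter fun a => g a = k).card := by
  classical
  have hcard : ∀ k, Fintype.card {a // f a = k} = Fintype.card {a // g a = k} := by
    intro k
    rw [Fintype.card_subtype, Fintype.card_subtype]
    exact (h k).symm
  have e : ∀ k, {a // f a = k} ≃ {a // g a = k} := fun k => Fintype.equivOfCardEq (hcard k)
  set π₀ : Equiv.Perm α :=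
    ((Equiv.sigmaFiberEquiv f).symm.trans (Equiv.sigmaCongrRight e)).trans
      (Equiv.sigmaFiberEquiv g) with hπ₀
  have hg0 : ∀ a, g (π₀ a) = f a := by
    intro a
    exact ((e (f a)) ⟨a, rfl⟩).2
  have hbij : (Finset.univ.filter fun π : Equiv.Perm α => g ∘ π = f).card
      = (Finset.univ.filter fun π : Equiv.Perm α => g ∘ π = g).card := by
    apply Finset.card_bij' (fun π _ => π₀.symm.trans π) (fun τ _ => π₀.trans τ)
    · intro π hπ
      simp only [Finset.mem_filter, Finset.mem_univ, true_and] at hπ ⊢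
      funext a
      simp only [Function.comp_apply, Equiv.trans_apply]
      have h1 : g (π (π₀.symm a)) = f (π₀.symm a) := congrFun hπ _
      rw [h1, ← hg0 (π₀.symm a), Equiv.apply_symm_apply]
    · intro τ hτ
      simp only [Finset.mem_filter, Finset.mem_univ, true_and] at hτ ⊢
      funext a
      simp only [Function.comp_apply, Equiv.trans_apply]
      have h1 : g (τ (π₀ a)) = g (π₀ a) := congrFun hτ _
      rw [h1, hg0 a]
    · intro π _
      ext a
      simp
    · intro τ _
      ext a
      simp
  rw [hbij]
  have h2 : (Finset.univ.filter fun π : Equiv.Perm α => g ∘ π = g).card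
      = Fintype.card {π : Equiv.Perm α // g ∘ π = g} := (Fintype.card_subtype _).symm
  rw [h2, DomMulAct.stabilizer_card]
  exact Finset.prod_congr rfl fun k _ => by rw [Fintype.card_subtype]

end AuxCount

section PathCount

variable {n : ℕ}

lemma pathPoint_eq_iff (π : Equiv.Perm (Fin n)) (j : ℕ) (x : Fin n → Bool) :
    pathPoint π j = x ↔ ∀ a : Fin n, x (π a) = decide ((a : ℕ) < j) := by
  constructor
  · rintro rfl a
    simp [pathPoint]
  · intro h
    funext i
    have := h (π.symm i)
    simp only [Equiv.apply_symm_apply] at this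
    simp [pathPoint, this]

lemma wt_pathPoint (π : Equiv.Perm (Fin n)) (j : ℕ) (hj : j ≤ n) :
    wt (pathPoint π j) = j := by
  classical
  have : wt (pathPoint π j) = (Finset.univ.filter fun i : Fin n => ((π.symm i : Fin n) : ℕ) < j).card := by
    rw [wt]
    congr 1
    apply Finset.filter_congr
    intro i _
    simp [pathPoint]
  rw [this, card_filter_comp_perm π.symm (fun a : Fin n => (a : ℕ) < j), card_val_filter (fun i => i < j)]
  have : (Finset.range n).filter (fun i => i < j) = Finset.range j := by
    ext i
    simp only [Finset.mem_filter, Finset.mem_range]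
    omega
  rw [this, Finset.card_range]

lemma pathPoint_mono (π : Equiv.Perm (Fin n)) {j l : ℕ} (hjl : j ≤ l) (i : Fin n) :
    pathPoint π j i ≤ pathPoint π l i := by
  simp only [pathPoint]
  rw [Bool.le_iff_imp]
  simp only [decide_eq_true_eq]
  omega

lemma count_pair (j l : ℕ) (hjl : j ≤ l) (hl : l ≤ n) (x y : Fin n → Bool) :
    (Finset.univ.filter fun π : Equiv.Perm (Fin n) =>
        pathPoint π j = x ∧ pathPoint π l = y).card
      = if wt x = j ∧ wt y = l ∧ (∀ i, x i ≤ y i)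
        then Nat.factorial (wt x) * Nat.factorial (wt y - wt x) * Nat.factorial (n - wt y)
        else 0 := by
  classical
  by_cases hc : wt x = j ∧ wt y = l ∧ (∀ i, x i ≤ y i)
  · obtain ⟨hxj, hyl, hxy⟩ := hc
    rw [if_pos ⟨hxj, hyl, hxy⟩]
    have hpred : ∀ π : Equiv.Perm (Fin n), (pathPoint π j = x ∧ pathPoint π l = y) ↔
        ((fun a => (x a, y a)) ∘ π =
          fun a : Fin n => (decide ((a : ℕ) < j), decide ((a : ℕ) < l))) := by
      intro π
      rw [pathPoint_eq_iff, pathPoint_eq_iff, funext_iff]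
      simp only [Function.comp_apply, Prod.mk.injEq]
      exact ⟨fun ⟨h1, h2⟩ a => ⟨h1 a, h2 a⟩, fun h => ⟨fun a => (h a).1, fun a => (h a).2⟩⟩
    rw [Finset.filter_congr (fun π _ => hpred π)]
    -- fiber cardinalities
    have h1 : (Finset.univ.filter fun a => (x a, y a) = (true, true)).card = wt x := by
      rw [wt]
      congr 1
      apply Finset.filter_congr
      intro a _
      simp only [Prod.mk.injEq]
      constructor
      · exact fun h => h.1
      · intro h
        exact ⟨h, Bool.le_iff_imp.mp (hxy a) h⟩
    have h2 : (Finset.univ.filter fun a => (x a, y a) = (false, true)).card = wt y - wt x := by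
      rw [← hamm_eq_of_le hxy, hamm]
      congr 1
      apply Finset.filter_congr
      intro a _
      simp only [Prod.mk.injEq]
      have := hxy a
      revert this
      cases x a <;> cases y a <;> simp
    have h3 : (Finset.univ.filter fun a => (x a, y a) = (true, false)).card = 0 := by
      rw [Finset.card_eq_zero, Finset.filter_eq_empty_iff]
      intro a _
      simp only [Prod.mk.injEq, not_and]
      intro hxa
      have := Bool.le_iff_imp.mp (hxy a) hxa
      simp [this]
    have h4 : (Finset.univ.filter fun a => (x a, y a) = (false, false)).card = n - wt y := by
      have hy : (Finset.univ.filter fun a => (x a, y a) = (false, false)).card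
          = (Finset.univ.filter fun a : Fin n => ¬ (y a = true)).card := by
        congr 1
        apply Finset.filter_congr
        intro a _
        simp only [Prod.mk.injEq]
        have := hxy a
        revert this
        cases x a <;> cases y a <;> simp
      rw [hy]
      have := Finset.card_filter_add_card_filter_not (s := (Finset.univ : Finset (Fin n)))
        (p := fun a => y a = true)
      have hcard : wt y + (Finset.univ.filter fun a : Fin n => ¬ (y a = true)).card = n := by
        rw [wt]
        simpa using this
      omega
    have t1 : (Finset.univ.filter fun a : Fin n =>
        (decide ((a : ℕ) < j), decide ((a : ℕ) < l)) = (true, true)).card = j := by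
      have : (Finset.univ.filter fun a : Fin n =>
          (decide ((a : ℕ) < j), decide ((a : ℕ) < l)) = (true, true))
          = Finset.univ.filter fun a : Fin n => (a : ℕ) < j ∧ (a : ℕ) < l := by
        apply Finset.filter_congr
        intro a _
        simp
      rw [this, card_val_filter (fun i => i < j ∧ i < l)]
      have : (Finset.range n).filter (fun i => i < j ∧ i < l) = Finset.range j := by
        ext i
        simp only [Finset.mem_filter, Finset.mem_range]
        omega
      rw [this, Finset.card_range]
    have t2 : (Finset.univ.filter fun a : Fin n =>
        (decide ((a : ℕ) < j), decide ((a : ℕ) < l)) = (false, true)).card = l - j := by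
      have : (Finset.univ.filter fun a : Fin n =>
          (decide ((a : ℕ) < j), decide ((a : ℕ) < l)) = (false, true))
          = Finset.univ.filter fun a : Fin n => ¬ (a : ℕ) < j ∧ (a : ℕ) < l := by
        apply Finset.filter_congr
        intro a _
        simp
      rw [this, card_val_filter (fun i => ¬ i < j ∧ i < l)]
      have : (Finset.range n).filter (fun i => ¬ i < j ∧ i < l) = Finset.Ico j l := by
        ext i
        simp only [Finset.mem_filter, Finset.mem_range, Finset.mem_Ico]
        omega
      rw [this, Nat.card_Ico]
    have t3 : (Finset.univ.filter fun a : Fin n =>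
        (decide ((a : ℕ) < j), decide ((a : ℕ) < l)) = (true, false)).card = 0 := by
      rw [Finset.card_eq_zero, Finset.filter_eq_empty_iff]
      intro a _
      simp only [Prod.mk.injEq, decide_eq_true_eq, decide_eq_false_iff_not, not_and]
      intro h1
      omega
    have t4 : (Finset.univ.filter fun a : Fin n =>
        (decide ((a : ℕ) < j), decide ((a : ℕ) < l)) = (false, false)).card = n - l := by
      have : (Finset.univ.filter fun a : Fin n =>
          (decide ((a : ℕ) < j), decide ((a : ℕ) < l)) = (false, false))
          = Finset.univ.filter fun a : Fin n => ¬ (a : ℕ) < j ∧ ¬ (a : ℕ) < l := by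
        apply Finset.filter_congr
        intro a _
        simp
      rw [this, card_val_filter (fun i => ¬ i < j ∧ ¬ i < l)]
      have : (Finset.range n).filter (fun i => ¬ i < j ∧ ¬ i < l) = Finset.Ico l n := by
        ext i
        simp only [Finset.mem_filter, Finset.mem_range, Finset.mem_Ico]
        omega
      rw [this, Nat.card_Ico]
    rw [card_perm_comp]
    · rw [Fintype.prod_prod_type]
      rw [Fintype.prod_bool, Fintype.prod_bool, Fintype.prod_bool]
      rw [h1, h2, h3, h4]
      simp [Nat.factorial]
      ring
    · intro k
      rcases k with ⟨b1, b2⟩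
      cases b1 <;> cases b2 <;>
        simp only [h1, h2, h3, h4, t1, t2, t3, t4] <;> omega
  · rw [if_neg hc, Finset.card_eq_zero, Finset.filter_eq_empty_iff]
    rintro π _ ⟨hx, hy⟩
    apply hc
    refine ⟨?_, ?_, ?_⟩
    · rw [← hx, wt_pathPoint π j (hjl.trans hl)]
    · rw [← hy, wt_pathPoint π l hl]
    · intro i
      rw [← hx, ← hy]
      exact pathPoint_mono π hjl i

lemma count_single (j : ℕ) (hj : j ≤ n) (x : Fin n → Bool) :
    (Finset.univ.filter fun π : Equiv.Perm (Fin n) => pathPoint π j = x).card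
      = if wt x = j then Nat.factorial (wt x) * Nat.factorial (n - wt x) else 0 := by
  have := count_pair j j le_rfl hj x x
  have heq : (Finset.univ.filter fun π : Equiv.Perm (Fin n) =>
      pathPoint π j = x ∧ pathPoint π j = x)
      = (Finset.univ.filter fun π : Equiv.Perm (Fin n) => pathPoint π j = x) := by
    apply Finset.filter_congr
    intro π _
    simp
  rw [heq] at this
  rw [this]
  by_cases hx : wt x = j
  · rw [if_pos ⟨hx, hx, fun i => le_rfl⟩, if_pos hx]
    simp [Nat.sub_self]
  · rw [if_neg (by tauto), if_neg hx]

end PathCount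

section Core

variable {n : ℕ}

private def mA (A : Finset (Fin n → Bool)) (π : Equiv.Perm (Fin n)) : ℕ :=
  ((Finset.range (n + 1)).filter (fun j => pathPoint π j ∈ A)).card

private def Mfun (x y : Fin n → Bool) : ℕ :=
  if (∀ i, y i ≤ x i) then
    Nat.factorial (wt y) * Nat.factorial (wt x - wt y) * Nat.factorial (n - wt x) else 0

lemma sum_mA (A : Finset (Fin n → Bool)) :
    ∑ π : Equiv.Perm (Fin n), mA A π
      = ∑ x ∈ A, Nat.factorial (wt x) * Nat.factorial (n - wt x) := by
  classical
  have : ∀ π, mA A π = ∑ j ∈ Finset.range (n + 1), (if pathPoint π j ∈ A then 1 else 0) := by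
    intro π
    rw [mA, Finset.card_filter]
  simp only [this]
  rw [Finset.sum_comm]
  have hinner : ∀ j ∈ Finset.range (n + 1),
      (∑ π : Equiv.Perm (Fin n), if pathPoint π j ∈ A then 1 else 0)
        = ∑ x ∈ A, (if wt x = j then Nat.factorial (wt x) * Nat.factorial (n - wt x) else 0) := by
    intro j hj
    have hj' : j ≤ n := by simp at hj; omega
    rw [← Finset.sum_filter, ← Finset.card_eq_sum_ones]
    rw [Finset.card_eq_sum_card_fiberwise (f := fun π => pathPoint π j) (s := Finset.univ.filter fun π => pathPoint π j ∈ A) (t := A)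
      (fun π hπ => (Finset.mem_filter.mp hπ).2)]
    apply Finset.sum_congr rfl
    intro x hx
    have : (Finset.univ.filter fun π : Equiv.Perm (Fin n) => pathPoint π j ∈ A).filter
        (fun π => pathPoint π j = x)
        = Finset.univ.filter fun π : Equiv.Perm (Fin n) => pathPoint π j = x := by
      rw [Finset.filter_filter]
      apply Finset.filter_congr
      intro π _
      constructor
      · exact fun h => h.2
      · intro h
        exact ⟨by rw [h]; exact hx, h⟩
    rw [this, count_single j hj' x]
  rw [Finset.sum_congr rfl hinner, Finset.sum_comm]
  apply Finset.sum_congr rfl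
  intro x hx
  rw [Finset.sum_ite_eq (Finset.range (n + 1)) (wt x)
    (fun _ => Nat.factorial (wt x) * Nat.factorial (n - wt x))]
  rw [if_pos (Finset.mem_range.mpr (Nat.lt_succ_of_le (wt_le x)))]

lemma ind_mul_ind (P Q : Prop) [Decidable P] [Decidable Q] :
    (if P then (1 : ℕ) else 0) * (if Q then 1 else 0) = if P ∧ Q then 1 else 0 := by
  split_ifs with h1 h2 h3 <;> simp_all

lemma sum_mA_sq (A : Finset (Fin n → Bool)) :
    ∑ π : Equiv.Perm (Fin n), (mA A π) ^ 2
      ≤ 2 * ∑ x ∈ A, ∑ y ∈ A, Mfun x y := by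
  classical
  have hm : ∀ π, (mA A π) ^ 2 = ∑ j ∈ Finset.range (n + 1), ∑ l ∈ Finset.range (n + 1),
      (if pathPoint π j ∈ A ∧ pathPoint π l ∈ A then 1 else 0) := by
    intro π
    rw [sq, mA, Finset.card_filter, Finset.sum_mul_sum]
    exact Finset.sum_congr rfl fun j _ => Finset.sum_congr rfl fun l _ => ind_mul_ind _ _
  simp only [hm]
  have hswap0 : (∑ π : Equiv.Perm (Fin n), ∑ j ∈ Finset.range (n+1), ∑ l ∈ Finset.range (n+1),
      (if pathPoint π j ∈ A ∧ pathPoint π l ∈ A then (1:ℕ) else 0))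
      = ∑ j ∈ Finset.range (n+1), ∑ l ∈ Finset.range (n+1), ∑ π : Equiv.Perm (Fin n),
      (if pathPoint π j ∈ A ∧ pathPoint π l ∈ A then (1:ℕ) else 0) := by
    rw [Finset.sum_comm]
    exact Finset.sum_congr rfl (fun j _ => Finset.sum_comm)
  rw [hswap0]
  have h1 : ∀ j ∈ Finset.range (n+1), ∑ l ∈ Finset.range (n+1),
        (∑ π : Equiv.Perm (Fin n), if pathPoint π j ∈ A ∧ pathPoint π l ∈ A then 1 else 0)
      = ∑ l ∈ Finset.range (n+1), ∑ p ∈ A ×ˢ A,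
        ((Finset.univ.filter fun π : Equiv.Perm (Fin n) =>
          pathPoint π j = p.1 ∧ pathPoint π l = p.2)).card := by
    intro j hj
    apply Finset.sum_congr rfl
    intro l hl
    rw [← Finset.sum_filter, ← Finset.card_eq_sum_ones]
    rw [Finset.card_eq_sum_card_fiberwise
      (f := fun π => (pathPoint π j, pathPoint π l))
        (s := Finset.univ.filter fun π => pathPoint π j ∈ A ∧ pathPoint π l ∈ A) (t := A ×ˢ A)
      (fun π hπ => by
        simp only [Finset.mem_coe, Finset.mem_filter, Finset.mem_univ, true_and] at hπ
        exact Finset.mem_product.mpr hπ)]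
    apply Finset.sum_congr rfl
    rintro ⟨x, y⟩ hp
    congr 1
    rw [Finset.filter_filter]
    apply Finset.filter_congr
    intro π _
    simp only [Prod.mk.injEq]
    constructor
    · exact fun h => h.2
    · rintro ⟨h1, h2⟩
      refine ⟨⟨?_, ?_⟩, h1, h2⟩
      · rw [h1]; exact (Finset.mem_product.mp hp).1
      · rw [h2]; exact (Finset.mem_product.mp hp).2
  rw [Finset.sum_congr rfl h1]
  have h2 : ∀ j ∈ Finset.range (n+1), ∀ l ∈ Finset.range (n+1), ∀ p ∈ A ×ˢ A,
      ((Finset.univ.filter fun π : Equiv.Perm (Fin n) =>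
          pathPoint π j = p.1 ∧ pathPoint π l = p.2)).card
        ≤ if wt p.1 = j ∧ wt p.2 = l then Mfun p.1 p.2 + Mfun p.2 p.1 else 0 := by
    rintro j hj l hl ⟨x, y⟩ _
    dsimp only
    simp only [Finset.mem_range] at hj hl
    rcases le_total j l with hjl | hlj
    · rw [count_pair j l hjl (by omega) x y]
      by_cases hc : wt x = j ∧ wt y = l ∧ (∀ i, x i ≤ y i)
      · rw [if_pos hc, if_pos ⟨hc.1, hc.2.1⟩]
        have : Mfun y x = Nat.factorial (wt x) * Nat.factorial (wt y - wt x)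
            * Nat.factorial (n - wt y) := by
          rw [Mfun, if_pos hc.2.2]
        omega
      · rw [if_neg hc]
        exact Nat.zero_le _
    · have hcomm : (Finset.univ.filter fun π : Equiv.Perm (Fin n) =>
          pathPoint π j = x ∧ pathPoint π l = y)
          = Finset.univ.filter fun π : Equiv.Perm (Fin n) =>
            pathPoint π l = y ∧ pathPoint π j = x := by
        apply Finset.filter_congr
        intro π _
        exact and_comm
      rw [hcomm, count_pair l j hlj (by omega) y x]
      by_cases hc : wt y = l ∧ wt x = j ∧ (∀ i, y i ≤ x i)
      · rw [if_pos hc, if_pos ⟨hc.2.1, hc.1⟩]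
        have : Mfun x y = Nat.factorial (wt y) * Nat.factorial (wt x - wt y)
            * Nat.factorial (n - wt x) := by
          rw [Mfun, if_pos hc.2.2]
        omega
      · rw [if_neg hc]
        exact Nat.zero_le _
  calc ∑ j ∈ Finset.range (n+1), ∑ l ∈ Finset.range (n+1), ∑ p ∈ A ×ˢ A,
        ((Finset.univ.filter fun π : Equiv.Perm (Fin n) =>
          pathPoint π j = p.1 ∧ pathPoint π l = p.2)).card
      ≤ ∑ j ∈ Finset.range (n+1), ∑ l ∈ Finset.range (n+1), ∑ p ∈ A ×ˢ A,
        (if wt p.1 = j ∧ wt p.2 = l then Mfun p.1 p.2 + Mfun p.2 p.1 else 0) := by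
        apply Finset.sum_le_sum
        intro j hj
        apply Finset.sum_le_sum
        intro l hl
        apply Finset.sum_le_sum
        intro p hp
        exact h2 j hj l hl p hp
    _ = ∑ p ∈ A ×ˢ A, (Mfun p.1 p.2 + Mfun p.2 p.1) := by
        have hthis : ∀ p ∈ A ×ˢ A, (∑ j ∈ Finset.range (n+1), ∑ l ∈ Finset.range (n+1),
            if wt p.1 = j ∧ wt p.2 = l then Mfun p.1 p.2 + Mfun p.2 p.1 else 0)
            = Mfun p.1 p.2 + Mfun p.2 p.1 := by
          rintro ⟨x, y⟩ _
          have hswap : ∀ j, (∑ l ∈ Finset.range (n+1),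
              if wt x = j ∧ wt y = l then Mfun x y + Mfun y x else 0)
              = if wt x = j then (if wt y ∈ Finset.range (n+1) then Mfun x y + Mfun y x else 0)
                else 0 := by
            intro j
            by_cases hxj : wt x = j
            · simp only [hxj, true_and, if_true]
              rw [Finset.sum_ite_eq (Finset.range (n+1)) (wt y)]
            · simp [hxj]
          simp only [hswap]
          rw [Finset.sum_ite_eq (Finset.range (n+1)) (wt x)]
          rw [if_pos (Finset.mem_range.mpr (Nat.lt_succ_of_le (wt_le x))),
            if_pos (Finset.mem_range.mpr (Nat.lt_succ_of_le (wt_le y)))]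
        have hs : ∀ j ∈ Finset.range (n+1), (∑ l ∈ Finset.range (n+1), ∑ p ∈ A ×ˢ A,
            (if wt p.1 = j ∧ wt p.2 = l then Mfun p.1 p.2 + Mfun p.2 p.1 else 0))
            = ∑ p ∈ A ×ˢ A, ∑ l ∈ Finset.range (n+1),
            (if wt p.1 = j ∧ wt p.2 = l then Mfun p.1 p.2 + Mfun p.2 p.1 else 0) :=
          fun j _ => Finset.sum_comm
        rw [Finset.sum_congr rfl hs, Finset.sum_comm]
        exact Finset.sum_congr rfl hthis
    _ = 2 * ∑ x ∈ A, ∑ y ∈ A, Mfun x y := by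
        rw [Finset.sum_add_distrib]
        rw [Finset.sum_product' (f := fun x y => Mfun x y),
          Finset.sum_product' (f := fun x y => Mfun y x)]
        rw [Finset.sum_comm (f := fun x y => Mfun y x)]
        omega

end Core

section Step2

variable {n : ℕ}

lemma densDown_nonneg (x : Fin n → Bool) (A : Finset (Fin n → Bool)) (k : ℕ) :
    0 ≤ densDown x A k := by
  rw [densDown]
  split_ifs
  · positivity
  · exact le_refl 0

lemma scoreDown_nonneg (x : Fin n → Bool) (A : Finset (Fin n → Bool)) :
    0 ≤ scoreDown x A :=
  Finset.sum_nonneg fun k _ => densDown_nonneg x A k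

lemma scoreDown_mul_eq (x : Fin n → Bool) (A : Finset (Fin n → Bool)) :
    scoreDown x A * ((Nat.factorial (wt x) * Nat.factorial (n - wt x) : ℕ) : ℝ)
      = ∑ y ∈ A, (if (∀ i, y i ≤ x i)
          then ((Nat.factorial (wt y) * Nat.factorial (wt x - wt y)
            * Nat.factorial (n - wt x) : ℕ) : ℝ) else 0) := by
  classical
  have hRHS : ∑ y ∈ A, (if (∀ i, y i ≤ x i)
          then ((Nat.factorial (wt y) * Nat.factorial (wt x - wt y)
            * Nat.factorial (n - wt x) : ℕ) : ℝ) else 0)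
      = ∑ k ∈ Finset.range (n + 1),
          ∑ y ∈ (A.filter (fun y => ∀ i, y i ≤ x i)).filter (fun y => hamm y x = k),
            ((Nat.factorial (wt y) * Nat.factorial (wt x - wt y)
              * Nat.factorial (n - wt x) : ℕ) : ℝ) := by
    rw [Finset.sum_ite, Finset.sum_const, smul_zero, add_zero]
    rw [Finset.sum_fiberwise_of_maps_to (g := fun y => hamm y x)
      (fun y _ => Finset.mem_range.mpr (Nat.lt_succ_of_le
        (by simpa [hamm] using Finset.card_filter_le Finset.univ (fun i => y i ≠ x i))))]
  rw [hRHS, scoreDown, Finset.sum_mul]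
  apply Finset.sum_congr rfl
  intro k hk
  have hfilter : (A.filter (fun y => ∀ i, y i ≤ x i)).filter (fun y => hamm y x = k)
      = A.filter (fun y => (∀ i, y i ≤ x i) ∧ hamm y x = k) := by
    rw [Finset.filter_filter]
  rw [hfilter]
  by_cases hkw : k ≤ wt x
  · rw [densDown, if_pos hkw]
    have hS : ∀ y ∈ A.filter (fun y => (∀ i, y i ≤ x i) ∧ hamm y x = k),
        ((Nat.factorial (wt y) * Nat.factorial (wt x - wt y)
          * Nat.factorial (n - wt x) : ℕ) : ℝ)
        = ((Nat.factorial (wt x - k) * Nat.factorial k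
            * Nat.factorial (n - wt x) : ℕ) : ℝ) := by
      intro y hy
      obtain ⟨hle, hh⟩ := (Finset.mem_filter.mp hy).2
      have hham := hamm_eq_of_le hle
      have hwy : wt y ≤ wt x := wt_mono hle
      have h1 : wt y = wt x - k := by omega
      have h2 : wt x - wt y = k := by omega
      rw [h2, h1]
    rw [Finset.sum_congr rfl hS, Finset.sum_const, nsmul_eq_mul]
    have hch : ((wt x).choose k : ℝ) ≠ 0 :=
      Nat.cast_ne_zero.mpr (Nat.choose_pos hkw).ne'
    have hfact : Nat.factorial (wt x - k) * Nat.factorial k * Nat.factorial (n - wt x)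
        * (wt x).choose k = Nat.factorial (wt x) * Nat.factorial (n - wt x) := by
      have h0 := Nat.choose_mul_factorial_mul_factorial hkw
      calc Nat.factorial (wt x - k) * Nat.factorial k * Nat.factorial (n - wt x)
          * (wt x).choose k
          = ((wt x).choose k * Nat.factorial k * Nat.factorial (wt x - k))
            * Nat.factorial (n - wt x) := by ring
        _ = Nat.factorial (wt x) * Nat.factorial (n - wt x) := by rw [h0]
    have hfactR := congrArg (fun m : ℕ => (m : ℝ)) hfact
    push_cast at hfactR ⊢
    rw [div_mul_eq_mul_div, eq_comm, eq_div_iff hch]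
    linear_combination ((A.filter (fun y => (∀ i, y i ≤ x i) ∧ hamm y x = k)).card : ℝ) * hfactR
  · rw [densDown, if_neg hkw, zero_mul, eq_comm]
    apply Finset.sum_eq_zero
    intro y hy
    exfalso
    obtain ⟨hle, hh⟩ := (Finset.mem_filter.mp hy).2
    have hham := hamm_eq_of_le hle
    have hwy : wt y ≤ wt x := wt_mono hle
    omega

lemma core_ineq (A : Finset (Fin n → Bool)) :
    (∑ x ∈ A, ((Nat.factorial (wt x) * Nat.factorial (n - wt x) : ℕ) : ℝ)) ^ 2
      ≤ 2 * (Nat.factorial n : ℝ) *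
        ∑ x ∈ A, scoreDown x A
          * ((Nat.factorial (wt x) * Nat.factorial (n - wt x) : ℕ) : ℝ) := by
  classical
  have hII : ∑ x ∈ A, scoreDown x A
      * ((Nat.factorial (wt x) * Nat.factorial (n - wt x) : ℕ) : ℝ)
      = ((∑ x ∈ A, ∑ y ∈ A, Mfun x y : ℕ) : ℝ) := by
    push_cast
    apply Finset.sum_congr rfl
    intro x _
    have hx := scoreDown_mul_eq x A
    push_cast at hx
    rw [hx]
    apply Finset.sum_congr rfl
    intro y _
    rw [Mfun]
    split_ifs with h
    · push_cast; ring
    · simp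
  have hCS : (∑ π : Equiv.Perm (Fin n), (mA A π : ℝ)) ^ 2
      ≤ (Nat.factorial n : ℝ) * ∑ π : Equiv.Perm (Fin n), ((mA A π : ℝ)) ^ 2 := by
    have h := sq_sum_le_card_mul_sum_sq
      (s := (Finset.univ : Finset (Equiv.Perm (Fin n)))) (f := fun π => (mA A π : ℝ))
    simpa [Finset.card_univ, Fintype.card_perm, Fintype.card_fin] using h
  have h1 : (∑ x ∈ A, ((Nat.factorial (wt x) * Nat.factorial (n - wt x) : ℕ) : ℝ))
      = ∑ π : Equiv.Perm (Fin n), (mA A π : ℝ) := by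
    rw [← Nat.cast_sum, ← Nat.cast_sum, sum_mA A]
  have h2 : ∑ π : Equiv.Perm (Fin n), ((mA A π : ℝ)) ^ 2
      ≤ 2 * ((∑ x ∈ A, ∑ y ∈ A, Mfun x y : ℕ) : ℝ) := by
    have := sum_mA_sq A
    calc ∑ π : Equiv.Perm (Fin n), ((mA A π : ℝ)) ^ 2
        = ((∑ π : Equiv.Perm (Fin n), (mA A π) ^ 2 : ℕ) : ℝ) := by push_cast; rfl
      _ ≤ ((2 * ∑ x ∈ A, ∑ y ∈ A, Mfun x y : ℕ) : ℝ) := Nat.cast_le.mpr this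
      _ = 2 * ((∑ x ∈ A, ∑ y ∈ A, Mfun x y : ℕ) : ℝ) := by push_cast; ring
  rw [h1, hII]
  calc (∑ π : Equiv.Perm (Fin n), (mA A π : ℝ)) ^ 2
      ≤ (Nat.factorial n : ℝ) * ∑ π : Equiv.Perm (Fin n), ((mA A π : ℝ)) ^ 2 := hCS
    _ ≤ (Nat.factorial n : ℝ) * (2 * ((∑ x ∈ A, ∑ y ∈ A, Mfun x y : ℕ) : ℝ)) := by
        apply mul_le_mul_of_nonneg_left h2 (by positivity)
    _ = 2 * (Nat.factorial n : ℝ) * ((∑ x ∈ A, ∑ y ∈ A, Mfun x y : ℕ) : ℝ) := by ring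

end Step2

section Binom

lemma cb_sq (m : ℕ) : (m + 1) * (Nat.centralBinom m) ^ 2 ≤ 16 ^ m := by
  induction m with
  | zero => simp [Nat.centralBinom]
  | succ m ih =>
    have hkey : (m + 1) ^ 2 * ((m + 2) * (Nat.centralBinom (m + 1)) ^ 2)
        = (m + 2) * (2 * (2 * m + 1) * Nat.centralBinom m) ^ 2 := by
      rw [← Nat.succ_mul_centralBinom_succ]
      ring
    have hpoly : 4 * (2 * m + 1) ^ 2 * (m + 2) ≤ 16 * (m + 1) ^ 3 := by nlinarith
    have hstep0 : (m + 2) * (2 * (2 * m + 1) * Nat.centralBinom m) ^ 2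
        ≤ 16 * (m + 1) ^ 2 * ((m + 1) * (Nat.centralBinom m) ^ 2) := by
      calc (m + 2) * (2 * (2 * m + 1) * Nat.centralBinom m) ^ 2
          = (4 * (2 * m + 1) ^ 2 * (m + 2)) * (Nat.centralBinom m) ^ 2 := by ring
        _ ≤ (16 * (m + 1) ^ 3) * (Nat.centralBinom m) ^ 2 :=
            Nat.mul_le_mul_right _ hpoly
        _ = 16 * (m + 1) ^ 2 * ((m + 1) * (Nat.centralBinom m) ^ 2) := by ring
    have hchain := hkey.trans_le (hstep0.trans (Nat.mul_le_mul_left _ ih))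
    have h2 : (m + 1) ^ 2 * ((m + 2) * (Nat.centralBinom (m + 1)) ^ 2)
        ≤ (m + 1) ^ 2 * (16 ^ (m + 1)) := by
      calc (m + 1) ^ 2 * ((m + 2) * (Nat.centralBinom (m + 1)) ^ 2)
          ≤ 16 * (m + 1) ^ 2 * 16 ^ m := hchain
        _ = (m + 1) ^ 2 * (16 ^ (m + 1)) := by ring
    exact Nat.le_of_mul_le_mul_left h2 (by positivity)

lemma middle_sq (n : ℕ) : (n.choose (n / 2)) ^ 2 * n ≤ 2 * 4 ^ n := by
  rcases Nat.even_or_odd n with ⟨m, hm⟩ | ⟨m, hm⟩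
  · subst hm
    have h2 : (m + m) / 2 = m := by omega
    rw [h2]
    have hcb : (m + m).choose m = Nat.centralBinom m := by
      rw [Nat.centralBinom]
      congr 1
      omega
    rw [hcb]
    have h16 : (16 : ℕ) ^ m = 4 ^ (m + m) := by
      rw [show (16 : ℕ) = 4 ^ 2 by norm_num, ← Nat.pow_mul]
      congr 1
      omega
    calc (Nat.centralBinom m) ^ 2 * (m + m)
        ≤ 2 * ((m + 1) * (Nat.centralBinom m) ^ 2) := by nlinarith [Nat.centralBinom_pos m]
      _ ≤ 2 * 16 ^ m := Nat.mul_le_mul_left _ (cb_sq m)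
      _ = 2 * 4 ^ (m + m) := by rw [h16]
  · subst hm
    have h2 : (2 * m + 1) / 2 = m := by omega
    rw [h2]
    have hle : (2 * m + 1).choose m ≤ 2 * Nat.centralBinom m := by
      rcases Nat.eq_zero_or_pos m with rfl | hm0
      · simp [Nat.centralBinom]
      · obtain ⟨m', rfl⟩ := Nat.exists_eq_succ_of_ne_zero hm0.ne'
        simp only [Nat.succ_eq_add_one]
        have hsplit : (2 * (m' + 1) + 1).choose (m' + 1)
            = (2 * (m' + 1)).choose m' + (2 * (m' + 1)).choose (m' + 1) := by
          rw [show 2 * (m' + 1) + 1 = (2 * (m' + 1)) + 1 by ring]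
          exact Nat.choose_succ_succ' (2 * (m' + 1)) m'
        have ha : (2 * (m' + 1)).choose m' ≤ (2 * (m' + 1)).choose ((2 * (m' + 1)) / 2) :=
          Nat.choose_le_middle m' (2 * (m' + 1))
        have hb : (2 * (m' + 1)) / 2 = m' + 1 := by omega
        rw [hb] at ha
        have hcb2 : Nat.centralBinom (m' + 1) = (2 * (m' + 1)).choose (m' + 1) := rfl
        rw [hsplit, hcb2]
        omega
    calc ((2 * m + 1).choose m) ^ 2 * (2 * m + 1)
        ≤ (2 * Nat.centralBinom m) ^ 2 * (2 * m + 1) :=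
          Nat.mul_le_mul_right _ (Nat.pow_le_pow_left hle 2)
      _ = 4 * ((Nat.centralBinom m) ^ 2 * (2 * m + 1)) := by ring
      _ ≤ 4 * (2 * ((m + 1) * (Nat.centralBinom m) ^ 2)) := by
          apply Nat.mul_le_mul_left
          nlinarith [Nat.centralBinom_pos m]
      _ ≤ 4 * (2 * 16 ^ m) := by
          apply Nat.mul_le_mul_left
          exact Nat.mul_le_mul_left _ (cb_sq m)
      _ = 2 * 4 ^ (2 * m + 1) := by
          rw [show (16 : ℕ) = 4 ^ 2 by norm_num, ← Nat.pow_mul]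
          ring_nf

lemma choose_mono_middle {n r : ℕ} : ∀ {s}, r ≤ s → s ≤ n / 2 → n.choose r ≤ n.choose s := by
  intro s
  induction s with
  | zero => intro h1 _; simp [Nat.le_zero.mp h1]
  | succ s ih =>
    intro h1 h2
    rcases Nat.lt_or_ge r (s + 1) with h | h
    · exact (ih (by omega) (by omega)).trans (Nat.choose_le_succ_of_lt_half_left (by omega))
    · have : r = s + 1 := by omega
      rw [this]

lemma choose_le_mul_pow (n w0 : ℕ) (s : ℕ) :
    ((n.choose (w0 + s)) : ℝ) ≤ (n.choose w0 : ℝ)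
      * (((n - w0 : ℕ) : ℝ) / ((w0 : ℝ) + 1)) ^ s := by
  induction s with
  | zero => simp
  | succ s ih =>
    have hq : (0 : ℝ) ≤ ((n - w0 : ℕ) : ℝ) / ((w0 : ℝ) + 1) := by positivity
    have hid := Nat.choose_succ_right_eq n (w0 + s)
    have hidR : ((n.choose (w0 + s + 1)) : ℝ) * ((w0 : ℝ) + (s : ℝ) + 1)
        = (n.choose (w0 + s) : ℝ) * ((n - (w0 + s) : ℕ) : ℝ) := by
      exact_mod_cast congrArg (fun m : ℕ => (m : ℝ)) hid
    have hstep : ((n.choose (w0 + s + 1)) : ℝ)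
        ≤ (n.choose (w0 + s) : ℝ) * (((n - w0 : ℕ) : ℝ) / ((w0 : ℝ) + 1)) := by
      have hpos : (0 : ℝ) < (w0 : ℝ) + (s : ℝ) + 1 := by positivity
      have hpos1 : (0 : ℝ) < (w0 : ℝ) + 1 := by positivity
      have hnat : (n - (w0 + s)) * (w0 + 1) ≤ (n - w0) * (w0 + s + 1) := by
        calc (n - (w0 + s)) * (w0 + 1) ≤ (n - w0) * (w0 + 1) :=
              Nat.mul_le_mul_right _ (by omega)
          _ ≤ (n - w0) * (w0 + s + 1) := Nat.mul_le_mul_left _ (by omega)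
      have hnatR : ((n - (w0 + s) : ℕ) : ℝ) * ((w0 : ℝ) + 1)
          ≤ ((n - w0 : ℕ) : ℝ) * ((w0 : ℝ) + (s : ℝ) + 1) := by exact_mod_cast hnat
      have hc : (0 : ℝ) ≤ (n.choose (w0 + s) : ℝ) := by positivity
      rw [← mul_div_assoc, le_div_iff₀ hpos1]
      have h5 : (((n.choose (w0 + s + 1)) : ℝ) * ((w0 : ℝ) + 1)) * ((w0 : ℝ) + (s : ℝ) + 1)
          ≤ ((n.choose (w0 + s) : ℝ) * ((n - w0 : ℕ) : ℝ)) * ((w0 : ℝ) + (s : ℝ) + 1) := by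
        calc (((n.choose (w0 + s + 1)) : ℝ) * ((w0 : ℝ) + 1)) * ((w0 : ℝ) + (s : ℝ) + 1)
            = (((n.choose (w0 + s + 1)) : ℝ) * ((w0 : ℝ) + (s : ℝ) + 1)) * ((w0 : ℝ) + 1) := by
              ring
          _ = ((n.choose (w0 + s) : ℝ) * ((n - (w0 + s) : ℕ) : ℝ)) * ((w0 : ℝ) + 1) := by
              rw [hidR]
          _ = (n.choose (w0 + s) : ℝ) * (((n - (w0 + s) : ℕ) : ℝ) * ((w0 : ℝ) + 1)) := by ring
          _ ≤ (n.choose (w0 + s) : ℝ) * (((n - w0 : ℕ) : ℝ) * ((w0 : ℝ) + (s : ℝ) + 1)) :=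
              mul_le_mul_of_nonneg_left hnatR hc
          _ = ((n.choose (w0 + s) : ℝ) * ((n - w0 : ℕ) : ℝ)) * ((w0 : ℝ) + (s : ℝ) + 1) := by
              ring
      exact le_of_mul_le_mul_right h5 hpos
    calc ((n.choose (w0 + (s + 1))) : ℝ) = ((n.choose (w0 + s + 1)) : ℝ) := rfl
      _ ≤ (n.choose (w0 + s) : ℝ) * (((n - w0 : ℕ) : ℝ) / ((w0 : ℝ) + 1)) := hstep
      _ ≤ ((n.choose w0 : ℝ) * (((n - w0 : ℕ) : ℝ) / ((w0 : ℝ) + 1)) ^ s)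
            * (((n - w0 : ℕ) : ℝ) / ((w0 : ℝ) + 1)) := mul_le_mul_of_nonneg_right ih hq
      _ = (n.choose w0 : ℝ) * (((n - w0 : ℕ) : ℝ) / ((w0 : ℝ) + 1)) ^ (s + 1) := by ring

end Binom

section Assemble

variable {n : ℕ}

lemma scoreDown_ge_one {A : Finset (Fin n → Bool)} {x : Fin n → Bool} (hx : x ∈ A) :
    1 ≤ scoreDown x A := by
  classical
  have h0 : (1 : ℝ) ≤ densDown x A 0 := by
    rw [densDown, if_pos (Nat.zero_le _), Nat.choose_zero_right, Nat.cast_one, div_one]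
    have hxmem : x ∈ A.filter (fun y => (∀ i, y i ≤ x i) ∧ hamm y x = 0) := by
      refine Finset.mem_filter.mpr ⟨hx, fun i => le_rfl, ?_⟩
      rw [hamm]
      simp
    exact_mod_cast Finset.card_pos.mpr ⟨x, hxmem⟩
  calc (1 : ℝ) ≤ densDown x A 0 := h0
    _ ≤ ∑ k ∈ Finset.range (n + 1), densDown x A k :=
        Finset.single_le_sum (fun k _ => densDown_nonneg x A k) (by simp)

lemma sum_score_ge (A : Finset (Fin n → Bool)) (Cmin Bm : ℕ)
    (hC : ∀ x ∈ A, Cmin ≤ n.choose (wt x)) (hB : ∀ x ∈ A, n.choose (wt x) ≤ Bm) :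
    (A.card : ℝ) ^ 2 * (Cmin : ℝ) ≤ 2 * (Bm : ℝ) ^ 2 * ∑ x ∈ A, scoreDown x A := by
  classical
  set F : ℝ := (Nat.factorial n : ℝ) with hFdef
  have hF : 0 < F := by
    rw [hFdef]
    exact_mod_cast Nat.factorial_pos n
  have hbase : ∀ x ∈ A, (n.choose (wt x) : ℝ)
      * ((Nat.factorial (wt x) * Nat.factorial (n - wt x) : ℕ) : ℝ) = F := by
    intro x _
    rw [hFdef]
    have := congrArg (fun m : ℕ => (m : ℝ)) (Nat.choose_mul_factorial_mul_factorial (wt_le x))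
    push_cast at this ⊢
    linarith [this]
  have hfl : ∀ x ∈ A, F ≤ (Bm : ℝ)
      * ((Nat.factorial (wt x) * Nat.factorial (n - wt x) : ℕ) : ℝ) := by
    intro x hx
    rw [← hbase x hx]
    have : (n.choose (wt x) : ℝ) ≤ (Bm : ℝ) := by exact_mod_cast hB x hx
    apply mul_le_mul_of_nonneg_right this (by positivity)
  have hfu : ∀ x ∈ A, (Cmin : ℝ)
      * ((Nat.factorial (wt x) * Nat.factorial (n - wt x) : ℕ) : ℝ) ≤ F := by
    intro x hx
    rw [← hbase x hx]
    have : (Cmin : ℝ) ≤ (n.choose (wt x) : ℝ) := by exact_mod_cast hC x hx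
    apply mul_le_mul_of_nonneg_right this (by positivity)
  set Sf : ℝ := ∑ x ∈ A, ((Nat.factorial (wt x) * Nat.factorial (n - wt x) : ℕ) : ℝ) with hSf
  set T : ℝ := ∑ x ∈ A, scoreDown x A
      * ((Nat.factorial (wt x) * Nat.factorial (n - wt x) : ℕ) : ℝ) with hT
  set S : ℝ := ∑ x ∈ A, scoreDown x A with hS
  have hSf0 : 0 ≤ Sf := Finset.sum_nonneg fun x _ => by positivity
  have hT0 : 0 ≤ T := Finset.sum_nonneg fun x _ =>
    mul_nonneg (scoreDown_nonneg x A) (by positivity)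
  have hS0 : 0 ≤ S := Finset.sum_nonneg fun x _ => scoreDown_nonneg x A
  have h_a : (A.card : ℝ) * F ≤ (Bm : ℝ) * Sf := by
    rw [hSf, Finset.mul_sum]
    calc (A.card : ℝ) * F = ∑ _x ∈ A, F := by rw [Finset.sum_const, nsmul_eq_mul]
      _ ≤ ∑ x ∈ A, (Bm : ℝ) * ((Nat.factorial (wt x) * Nat.factorial (n - wt x) : ℕ) : ℝ) :=
          Finset.sum_le_sum hfl
  have h_core : Sf ^ 2 ≤ 2 * F * T := core_ineq A
  have h_T : (Cmin : ℝ) * T ≤ F * S := by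
    rw [hT, hS, Finset.mul_sum, Finset.mul_sum]
    apply Finset.sum_le_sum
    intro x hx
    calc (Cmin : ℝ) * (scoreDown x A
          * ((Nat.factorial (wt x) * Nat.factorial (n - wt x) : ℕ) : ℝ))
        = scoreDown x A * ((Cmin : ℝ)
          * ((Nat.factorial (wt x) * Nat.factorial (n - wt x) : ℕ) : ℝ)) := by ring
      _ ≤ scoreDown x A * F := mul_le_mul_of_nonneg_left (hfu x hx) (scoreDown_nonneg x A)
      _ = F * scoreDown x A := by ring
  have hmain : ((A.card : ℝ) ^ 2 * (Cmin : ℝ)) * F ^ 2 ≤ (2 * (Bm : ℝ) ^ 2 * S) * F ^ 2 := by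
    calc ((A.card : ℝ) ^ 2 * (Cmin : ℝ)) * F ^ 2
        = ((A.card : ℝ) * F) ^ 2 * (Cmin : ℝ) := by ring
      _ ≤ ((Bm : ℝ) * Sf) ^ 2 * (Cmin : ℝ) := by
          apply mul_le_mul_of_nonneg_right _ (by positivity)
          exact pow_le_pow_left₀ (by positivity) h_a 2
      _ = (Bm : ℝ) ^ 2 * (Cmin : ℝ) * Sf ^ 2 := by ring
      _ ≤ (Bm : ℝ) ^ 2 * (Cmin : ℝ) * (2 * F * T) := by
          apply mul_le_mul_of_nonneg_left h_core (by positivity)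
      _ = 2 * (Bm : ℝ) ^ 2 * F * ((Cmin : ℝ) * T) := by ring
      _ ≤ 2 * (Bm : ℝ) ^ 2 * F * (F * S) := by
          apply mul_le_mul_of_nonneg_left h_T (by positivity)
      _ = (2 * (Bm : ℝ) ^ 2 * S) * F ^ 2 := by ring
  exact le_of_mul_le_mul_right hmain (by positivity)

end Assemble

section CaseB
set_option maxHeartbeats 1000000

lemma caseB_bound {n d : ℕ} {ε L : ℝ} (hn : 1 ≤ (n : ℝ)) (hεpos : 0 < ε) (hε2 : ε ≤ 1 / 2)
    (hL : L = Real.log (100 / ε))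
    (hdle : (d : ℝ) ≤ 2 * Real.sqrt (2 * n * L) + 2)
    (hcase : n < 2 * d ∨ n ^ 2 < d ^ 3) :
    ε ^ 16 * n ≤ 100 ^ 16 * 256 + 32768 * 10 ^ 6 + 8 := by
  have hε1 : ε ≤ 1 := by linarith
  have h100ε : (2 : ℝ) ≤ 100 / ε := by
    rw [le_div_iff₀ hεpos]
    linarith
  have h100pos : (0 : ℝ) < 100 / ε := by positivity
  have hL2 : Real.log 2 ≤ L := by
    rw [hL]
    exact Real.log_le_log (by norm_num) h100ε
  have hLpos : 0 < L := lt_of_lt_of_le (Real.log_pos one_lt_two) hL2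
  have hsq : Real.sqrt (2 * n * L) ^ 2 = 2 * n * L := Real.sq_sqrt (by positivity)
  have hsqnn : 0 ≤ Real.sqrt (2 * n * L) := Real.sqrt_nonneg _
  rcases hcase with hc1 | hc2
  · -- n < 2d
    have hnd : (n : ℝ) < 2 * d := by exact_mod_cast hc1
    by_cases hn8 : (n : ℝ) ≤ 8
    · have : ε ^ 16 ≤ 1 := pow_le_one₀ hεpos.le hε1
      nlinarith
    · push_neg at hn8
      have h1 : (n : ℝ) / 2 ≤ 4 * Real.sqrt (2 * n * L) := by linarith
      have h3 : ((n : ℝ) / 2) ^ 2 ≤ 16 * (2 * n * L) := by nlinarith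
      have h4 : (n : ℝ) ≤ 128 * L := by nlinarith
      have h5 : Real.exp ((n : ℝ) / 128) ≤ 100 / ε := by
        rw [← Real.exp_log h100pos, ← hL]
        exact Real.exp_le_exp.mpr (by linarith)
      have hexp1 : Real.exp (-(n : ℝ) / 128) * Real.exp ((n : ℝ) / 128) = 1 := by
        rw [← Real.exp_add, show -(n : ℝ) / 128 + (n : ℝ) / 128 = 0 by ring, Real.exp_zero]
      have h6 : ε ≤ 100 * Real.exp (-(n : ℝ) / 128) := by
        have hεe : ε * Real.exp ((n : ℝ) / 128) ≤ 100 := by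
          have h := mul_le_mul_of_nonneg_left h5 hεpos.le
          have h100 : ε * (100 / ε) = 100 := by field_simp
          linarith [h, h100]
        nlinarith [Real.exp_pos ((n : ℝ) / 128), Real.exp_pos (-(n : ℝ) / 128)]
      have h7 : ε ^ 16 ≤ 100 ^ 16 * Real.exp (-(n : ℝ) / 8) := by
        calc ε ^ 16 ≤ (100 * Real.exp (-(n : ℝ) / 128)) ^ 16 :=
              pow_le_pow_left₀ hεpos.le h6 16
          _ = 100 ^ 16 * Real.exp (-(n : ℝ) / 128) ^ 16 := by rw [mul_pow]
          _ = 100 ^ 16 * Real.exp (-(n : ℝ) / 8) := by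
              rw [← Real.exp_nat_mul]
              congr 1
              push_cast
              ring
      have hx : (n : ℝ) / 16 ≤ Real.exp ((n : ℝ) / 16) := by
        linarith [Real.add_one_le_exp ((n : ℝ) / 16)]
      have hsq2 : ((n : ℝ) / 16) ^ 2 ≤ Real.exp ((n : ℝ) / 8) := by
        rw [show (n : ℝ) / 8 = (n : ℝ) / 16 + (n : ℝ) / 16 by ring, Real.exp_add, sq]
        exact mul_le_mul hx hx (by positivity) (Real.exp_pos _).le
      have hexp2 : Real.exp (-(n : ℝ) / 8) * Real.exp ((n : ℝ) / 8) = 1 := by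
        rw [← Real.exp_add, show -(n : ℝ) / 8 + (n : ℝ) / 8 = 0 by ring, Real.exp_zero]
      have h8 : (n : ℝ) * Real.exp (-(n : ℝ) / 8) ≤ 256 := by
        have hmul := mul_le_mul_of_nonneg_right hsq2 (Real.exp_pos (-(n : ℝ) / 8)).le
        rw [mul_comm (Real.exp ((n : ℝ) / 8)), hexp2] at hmul
        nlinarith [Real.exp_pos (-(n : ℝ) / 8)]
      calc ε ^ 16 * n ≤ (100 ^ 16 * Real.exp (-(n : ℝ) / 8)) * n :=
            mul_le_mul_of_nonneg_right h7 (by positivity)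
        _ = 100 ^ 16 * ((n : ℝ) * Real.exp (-(n : ℝ) / 8)) := by ring
        _ ≤ 100 ^ 16 * 256 := by nlinarith
        _ ≤ 100 ^ 16 * 256 + 32768 * 10 ^ 6 + 8 := by norm_num
  · -- n^2 < d^3
    have hlog2 : (0.6931471803 : ℝ) < Real.log 2 := Real.log_two_gt_d9
    have h2nL : (1 : ℝ) ≤ 2 * n * L := by nlinarith
    have hsqrt1 : (1 : ℝ) ≤ Real.sqrt (2 * n * L) := by
      rw [show (1 : ℝ) = Real.sqrt 1 by simp]
      exact Real.sqrt_le_sqrt h2nL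
    have hd4 : (d : ℝ) ≤ 4 * Real.sqrt (2 * n * L) := by linarith
    have hd6 : (d : ℝ) ^ 6 ≤ 4096 * (2 * n * L) ^ 3 := by
      calc (d : ℝ) ^ 6 ≤ (4 * Real.sqrt (2 * n * L)) ^ 6 :=
            pow_le_pow_left₀ (by positivity) hd4 6
        _ = 4096 * (Real.sqrt (2 * n * L) ^ 2) ^ 3 := by ring
        _ = 4096 * (2 * n * L) ^ 3 := by rw [hsq]
    have hn2d3 : ((n : ℝ) ^ 2) ≤ (d : ℝ) ^ 3 := by exact_mod_cast hc2.le
    have hn4 : (n : ℝ) ^ 4 ≤ 32768 * (n : ℝ) ^ 3 * L ^ 3 := by nlinarith [hn2d3, hd6]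
    have hnle : (n : ℝ) ≤ 32768 * L ^ 3 := by
      have h9 : (n : ℝ) ^ 3 * (n : ℝ) ≤ (n : ℝ) ^ 3 * (32768 * L ^ 3) := by nlinarith
      exact le_of_mul_le_mul_left h9 (by positivity)
    have hLε : L ≤ 100 / ε := by
      rw [hL]
      linarith [Real.log_le_sub_one_of_pos h100pos]
    have hL3 : L ^ 3 ≤ (100 / ε) ^ 3 := pow_le_pow_left₀ hLpos.le hLε 3
    have hkey : ε ^ 16 * (100 / ε) ^ 3 = 10 ^ 6 * ε ^ 13 := by
      field_simp
      ring
    have h13 : ε ^ 13 ≤ 1 := pow_le_one₀ hεpos.le hε1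
    calc ε ^ 16 * n ≤ ε ^ 16 * (32768 * L ^ 3) :=
          mul_le_mul_of_nonneg_left hnle (by positivity)
      _ ≤ ε ^ 16 * (32768 * (100 / ε) ^ 3) := by
          apply mul_le_mul_of_nonneg_left _ (by positivity)
          nlinarith
      _ = 32768 * (ε ^ 16 * (100 / ε) ^ 3) := by ring
      _ = 32768 * (10 ^ 6 * ε ^ 13) := by rw [hkey]
      _ ≤ 32768 * 10 ^ 6 := by nlinarith
      _ ≤ 100 ^ 16 * 256 + 32768 * 10 ^ 6 + 8 := by norm_num

end CaseB

section CaseA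
set_option maxHeartbeats 1000000

lemma caseA_ratio {n d : ℕ} {ε L : ℝ} (hn : 1 ≤ (n : ℝ)) (hεpos : 0 < ε) (hε2 : ε ≤ 1 / 2)
    (hεn : 1 / (n : ℝ) ≤ ε) (hL : L = Real.log (100 / ε))
    (hdle : (d : ℝ) ≤ 2 * Real.sqrt (2 * n * L) + 2)
    (hd2 : 2 ≤ d) (hdn : 2 * d ≤ n) (hd3 : d ^ 3 ≤ n ^ 2) :
    ((n.choose (n / 2)) : ℝ) ≤ (n.choose ((n - d + 1) / 2) : ℝ) * (1 / ε) ^ 8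
      * Real.exp (8 * Real.log 100 + 126) := by
  have hNpos : (0 : ℝ) < n := by linarith
  have h100ε : (2 : ℝ) ≤ 100 / ε := by
    rw [le_div_iff₀ hεpos]
    linarith
  have h100pos : (0 : ℝ) < 100 / ε := by positivity
  have hL2 : Real.log 2 ≤ L := by
    rw [hL]
    exact Real.log_le_log (by norm_num) h100ε
  have hLpos : 0 < L := lt_of_lt_of_le (Real.log_pos one_lt_two) hL2
  have hsq : Real.sqrt (2 * n * L) ^ 2 = 2 * n * L := Real.sq_sqrt (by positivity)
  have hsqnn : 0 ≤ Real.sqrt (2 * n * L) := Real.sqrt_nonneg _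
  set w0 : ℕ := (n - d + 1) / 2 with hw0def
  set s : ℕ := n / 2 - w0 with hsdef
  have hhalfsplit : n / 2 = w0 + s := by omega
  have hs2 : 2 * s ≤ d := by omega
  set N : ℝ := (n : ℝ) with hNdef
  set D : ℝ := (d : ℝ) with hDdef
  have hDN : 2 * D ≤ N := by rw [hNdef, hDdef]; exact_mod_cast hdn
  have hD2 : (2 : ℝ) ≤ D := by rw [hDdef]; exact_mod_cast hd2
  have hD3 : D ^ 3 ≤ N ^ 2 := by rw [hNdef, hDdef]; exact_mod_cast hd3
  have hND : (0 : ℝ) < N - D := by linarith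
  set q : ℝ := ((n - w0 : ℕ) : ℝ) / ((w0 : ℝ) + 1) with hqdef
  have hq1 : ((n - w0 : ℕ) : ℝ) * 2 ≤ N + D := by
    have h := (show 2 * (n - w0) ≤ n + d by omega)
    have hc : 2 * ((n - w0 : ℕ) : ℝ) ≤ (n : ℝ) + (d : ℝ) := by exact_mod_cast h
    rw [hNdef, hDdef]
    linarith
  have hq2 : N - D ≤ 2 * ((w0 : ℝ) + 1) := by
    have h := (show n ≤ d + 2 * w0 + 2 by omega)
    have hc : (n : ℝ) ≤ (d : ℝ) + 2 * (w0 : ℝ) + 2 := by exact_mod_cast h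
    rw [hNdef, hDdef]
    linarith
  have hw01 : (0 : ℝ) < (w0 : ℝ) + 1 := by positivity
  have hqle : q ≤ (N + D) / (N - D) := by
    rw [hqdef]
    have h1 : ((n - w0 : ℕ) : ℝ) ≤ (N + D) / 2 := by linarith
    have h2 : (N - D) / 2 ≤ (w0 : ℝ) + 1 := by linarith
    have h3 : (0 : ℝ) < (N - D) / 2 := by linarith
    calc ((n - w0 : ℕ) : ℝ) / ((w0 : ℝ) + 1)
        ≤ ((N + D) / 2) / ((N - D) / 2) := div_le_div₀ (by positivity) h1 h3 h2
      _ = (N + D) / (N - D) := by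
          rw [div_div_div_comm]
          norm_num
  set t : ℝ := 2 * D / (N - D) with htdef
  have ht : (N + D) / (N - D) = 1 + t := by
    rw [htdef]
    field_simp
    ring
  have htnn : 0 ≤ t := by positivity
  have hsD : (s : ℝ) ≤ D / 2 := by
    have hc : 2 * (s : ℝ) ≤ (d : ℝ) := by exact_mod_cast hs2
    rw [hDdef]
    linarith
  have hqnn : 0 ≤ q := by positivity
  have hqs : q ^ s ≤ Real.exp (D ^ 2 / (N - D)) := by
    have hstep1 : q ^ s ≤ (1 + t) ^ s := pow_le_pow_left₀ hqnn (by rw [← ht]; exact hqle) s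
    have hstep2 : (1 + t) ^ s ≤ Real.exp t ^ s :=
      pow_le_pow_left₀ (by linarith) (by linarith [Real.add_one_le_exp t]) s
    have hstep3 : Real.exp t ^ s = Real.exp ((s : ℝ) * t) := by
      rw [← Real.exp_nat_mul]
    have hstep4 : (s : ℝ) * t ≤ D ^ 2 / (N - D) := by
      have : (s : ℝ) * t ≤ (D / 2) * t := mul_le_mul_of_nonneg_right hsD htnn
      have heq : (D / 2) * t = D ^ 2 / (N - D) := by
        rw [htdef]
        field_simp
      linarith
    calc q ^ s ≤ Real.exp t ^ s := hstep1.trans hstep2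
      _ = Real.exp ((s : ℝ) * t) := hstep3
      _ ≤ Real.exp (D ^ 2 / (N - D)) := Real.exp_le_exp.mpr hstep4
  -- exponent bound
  have hLn : L ≤ 100 * N := by
    have h1 : L ≤ 100 / ε := by
      rw [hL]
      linarith [Real.log_le_sub_one_of_pos h100pos]
    have h2 : (1 : ℝ) ≤ ε * N := by
      have := mul_le_mul_of_nonneg_right hεn hNpos.le
      rw [div_mul_cancel₀ _ hNpos.ne'] at this
      linarith
    have h3 : 100 / ε ≤ 100 * N := by
      rw [div_le_iff₀ hεpos]
      nlinarith
    linarith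
  have hsqle : Real.sqrt (2 * n * L) ≤ 15 * N := by
    calc Real.sqrt (2 * n * L) ≤ Real.sqrt ((15 * N) ^ 2) := by
          apply Real.sqrt_le_sqrt
          nlinarith
      _ = 15 * N := Real.sqrt_sq (by positivity)
  have hD2b : D ^ 2 ≤ 8 * N * L + 124 * N := by nlinarith [hdle, hsq, hsqle, hsqnn, hn]
  have hkey : D ^ 3 ≤ 2 * N * (N - D) := by nlinarith
  have hid : D ^ 2 / (N - D) = D ^ 2 / N + D ^ 3 / (N * (N - D)) := by
    field_simp
    ring
  have hsplit2 : D ^ 3 / (N * (N - D)) ≤ 2 := by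
    rw [div_le_iff₀ (by positivity)]
    linarith
  have hD2N : D ^ 2 / N ≤ 8 * L + 124 := by
    rw [div_le_iff₀ hNpos]
    nlinarith
  have hexp : D ^ 2 / (N - D) ≤ 8 * Real.log (1 / ε) + (8 * Real.log 100 + 126) := by
    have hLsplit : L = Real.log 100 + Real.log (1 / ε) := by
      rw [hL, Real.log_div (by norm_num) hεpos.ne', one_div, Real.log_inv]
      ring
    have : D ^ 2 / (N - D) ≤ 8 * L + 126 := by linarith [hid, hsplit2, hD2N]
    rw [hLsplit] at this
    linarith
  have hqsfin : q ^ s ≤ (1 / ε) ^ 8 * Real.exp (8 * Real.log 100 + 126) := by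
    calc q ^ s ≤ Real.exp (D ^ 2 / (N - D)) := hqs
      _ ≤ Real.exp (8 * Real.log (1 / ε) + (8 * Real.log 100 + 126)) :=
          Real.exp_le_exp.mpr hexp
      _ = Real.exp (8 * Real.log (1 / ε)) * Real.exp (8 * Real.log 100 + 126) :=
          Real.exp_add _ _
      _ = (1 / ε) ^ 8 * Real.exp (8 * Real.log 100 + 126) := by
          rw [show (8 : ℝ) * Real.log (1 / ε) = ((8 : ℕ) : ℝ) * Real.log (1 / ε) by norm_num,
            Real.exp_nat_mul, Real.exp_log (by positivity)]
  have happ := choose_le_mul_pow n w0 s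
  calc ((n.choose (n / 2)) : ℝ) = ((n.choose (w0 + s)) : ℝ) := by rw [hhalfsplit]
    _ ≤ (n.choose w0 : ℝ) * q ^ s := happ
    _ ≤ (n.choose w0 : ℝ) * ((1 / ε) ^ 8 * Real.exp (8 * Real.log 100 + 126)) :=
        mul_le_mul_of_nonneg_left hqsfin (by positivity)
    _ = (n.choose w0 : ℝ) * (1 / ε) ^ 8 * Real.exp (8 * Real.log 100 + 126) := by ring

end CaseA

set_option maxHeartbeats 1000000 in
theorem avg_down_score_lower_bound :
    ∃ c : ℝ, 0 < c ∧ ∀ n : ℕ, 1 ≤ n → ∀ ε : ℝ, 1 / (n : ℝ) ≤ ε → ε ≤ 1 / 2 →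
      ∀ A : Finset (Fin n → Bool), A ⊆ Lmid n ε → A.Nonempty → ∀ σ : ℝ,
        (A.card : ℝ) = σ * 2 ^ n →
        c * ε ^ 8 * σ * Real.sqrt n / Real.sqrt (Real.log (1 / ε)) ≤
          (∑ x ∈ A, scoreDown x A) / (A.card : ℝ) := by
  classical
  set K1 : ℝ := Real.exp (8 * Real.log 100 + 126) with hK1def
  have hK1pos : 0 < K1 := Real.exp_pos _
  set KB : ℝ := 100 ^ 16 * 256 + 32768 * 10 ^ 6 + 8 with hKBdef
  have hKBpos : (0 : ℝ) < KB := by rw [hKBdef]; norm_num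
  have hlog2pos : (0 : ℝ) < Real.log 2 := Real.log_pos one_lt_two
  have hs2pos : (0 : ℝ) < Real.sqrt 2 := Real.sqrt_pos.mpr (by norm_num)
  have hden : (0 : ℝ) < 2 * Real.sqrt 2 * K1 + Real.sqrt KB :=
    add_pos_of_pos_of_nonneg (by positivity) (Real.sqrt_nonneg _)
  set c : ℝ := Real.sqrt (Real.log 2) / (2 * Real.sqrt 2 * K1 + Real.sqrt KB) with hcdef
  have hcnn : 0 ≤ c := by rw [hcdef]; positivity
  refine ⟨c, div_pos (Real.sqrt_pos.mpr hlog2pos) hden, ?_⟩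
  intro n hn ε hεn hε2 A hAL hAne σ hσ
  have hnR : (1 : ℝ) ≤ (n : ℝ) := by exact_mod_cast hn
  have hεpos : 0 < ε := lt_of_lt_of_le (by positivity) hεn
  set L : ℝ := Real.log (100 / ε) with hLdef
  have h100ε : (2 : ℝ) ≤ 100 / ε := by rw [le_div_iff₀ hεpos]; linarith
  have hL2 : Real.log 2 ≤ L := by rw [hLdef]; exact Real.log_le_log (by norm_num) h100ε
  have hLpos : 0 < L := lt_of_lt_of_le hlog2pos hL2
  set d : ℕ := dPar n ε with hddef
  have hdle : (d : ℝ) ≤ 2 * Real.sqrt (2 * n * L) + 2 := by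
    rw [hddef, dPar, hLdef]
    push_cast
    have hceil : ((⌈Real.sqrt (2 * n * Real.log (100 / ε))⌉₊ : ℕ) : ℝ)
        ≤ Real.sqrt (2 * n * Real.log (100 / ε)) + 1 :=
      (Nat.ceil_lt_add_one (Real.sqrt_nonneg _)).le
    linarith
  have hd2 : 2 ≤ d := by
    rw [hddef, dPar]
    have h0 : 0 < ⌈Real.sqrt (2 * n * Real.log (100 / ε))⌉₊ := by
      apply Nat.ceil_pos.mpr
      apply Real.sqrt_pos.mpr
      have : Real.log (100 / ε) = L := hLdef.symm
      rw [this]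
      positivity
    omega
  have hcardpos : (0 : ℝ) < A.card := by exact_mod_cast Finset.card_pos.mpr hAne
  have havg1 : (1 : ℝ) ≤ (∑ x ∈ A, scoreDown x A) / A.card := by
    rw [le_div_iff₀ hcardpos, one_mul]
    calc (A.card : ℝ) = ∑ _x ∈ A, (1 : ℝ) := by rw [Finset.sum_const, nsmul_eq_mul, mul_one]
      _ ≤ ∑ x ∈ A, scoreDown x A := Finset.sum_le_sum (fun x hx => scoreDown_ge_one hx)
  have h2npos : (0 : ℝ) < 2 ^ n := by positivity
  have hσval : σ = (A.card : ℝ) / 2 ^ n := by rw [eq_div_iff h2npos.ne']; linarith [hσ]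
  have hσpos : 0 < σ := by rw [hσval]; exact div_pos hcardpos h2npos
  have hσ1 : σ ≤ 1 := by
    rw [hσval, div_le_one h2npos]
    have hc' : A.card ≤ 2 ^ n := by
      have h := Finset.card_le_univ A
      simpa using h
    exact_mod_cast hc'
  have hεlog : Real.log 2 ≤ Real.log (1 / ε) :=
    Real.log_le_log (by norm_num) (by rw [le_div_iff₀ hεpos]; linarith)
  have hslog : Real.sqrt (Real.log 2) ≤ Real.sqrt (Real.log (1 / ε)) := Real.sqrt_le_sqrt hεlog
  have hslogpos : 0 < Real.sqrt (Real.log (1 / ε)) :=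
    lt_of_lt_of_le (Real.sqrt_pos.mpr hlog2pos) hslog
  by_cases hcase : 2 * d ≤ n ∧ d ^ 3 ≤ n ^ 2
  · -- main case
    obtain ⟨hdn, hd3⟩ := hcase
    set w0 : ℕ := (n - d + 1) / 2 with hw0
    set half : ℕ := n / 2 with hhalf
    have hconstr : ∀ x ∈ A, ((n : ℝ) - d) / 2 ≤ wt x ∧ (wt x : ℝ) ≤ ((n : ℝ) + d) / 2 := by
      intro x hx
      have hmem := hAL hx
      rw [Lmid, Finset.mem_filter] at hmem
      rw [← hddef] at hmem
      exact hmem.2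
    have hCx : ∀ x ∈ A, n.choose w0 ≤ n.choose (wt x) := by
      intro x hx
      obtain ⟨h1, h2⟩ := hconstr x hx
      have hl : n ≤ d + 2 * wt x := by
        have h3 : (n : ℝ) ≤ (d : ℝ) + 2 * (wt x : ℝ) := by linarith
        exact_mod_cast h3
      have hu : 2 * wt x ≤ n + d := by
        have h3 : 2 * (wt x : ℝ) ≤ (n : ℝ) + (d : ℝ) := by linarith
        exact_mod_cast h3
      have hwn := wt_le x
      rcases le_or_gt (wt x) (n - wt x) with hcmp | hcmp
      · exact choose_mono_middle (by omega) (by omega)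
      · rw [← Nat.choose_symm hwn]
        exact choose_mono_middle (by omega) (by omega)
    have hBx : ∀ x ∈ A, n.choose (wt x) ≤ n.choose half :=
      fun x _ => Nat.choose_le_middle _ _
    have hsum := sum_score_ge A (n.choose w0) (n.choose half) hCx hBx
    have hratio := caseA_ratio hnR hεpos hε2 hεn hLdef hdle hd2 hdn hd3
    rw [← hw0, ← hhalf, ← hK1def] at hratio
    have hmid := middle_sq n
    rw [← hhalf] at hmid
    have hmidR : ((n.choose half : ℕ) : ℝ) ^ 2 * (n : ℝ) ≤ 2 * 4 ^ n := by exact_mod_cast hmid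
    have hBn : Real.sqrt n * (n.choose half : ℝ) ≤ Real.sqrt 2 * 2 ^ n := by
      have h1 : Real.sqrt ((n.choose half : ℝ) ^ 2 * n)
          = (n.choose half : ℝ) * Real.sqrt n := by
        rw [Real.sqrt_mul (by positivity), Real.sqrt_sq (by positivity)]
      have h2 : Real.sqrt (2 * 4 ^ n) = Real.sqrt 2 * 2 ^ n := by
        rw [Real.sqrt_mul (by norm_num),
          show ((4 : ℝ) ^ n) = (2 ^ n) ^ 2 by
            rw [show (4 : ℝ) = 2 ^ 2 by norm_num, ← pow_mul, mul_comm, pow_mul],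
          Real.sqrt_sq (by positivity)]
      have h3 := Real.sqrt_le_sqrt hmidR
      rw [h1, h2] at h3
      linarith
    have hCpos : (0 : ℝ) < (n.choose w0 : ℝ) := by
      exact_mod_cast Nat.choose_pos (show w0 ≤ n by omega)
    have hBpos : (0 : ℝ) < (n.choose half : ℝ) := by
      exact_mod_cast Nat.choose_pos (show half ≤ n by omega)
    have havg2 : (A.card : ℝ) * (n.choose w0 : ℝ) / (2 * (n.choose half : ℝ) ^ 2)
        ≤ (∑ x ∈ A, scoreDown x A) / A.card := by
      rw [div_le_div_iff₀ (by positivity) hcardpos]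
      nlinarith [hsum]
    have hp1 : ε ^ 8 * (n.choose half : ℝ) ≤ (n.choose w0 : ℝ) * K1 := by
      have h4 := mul_le_mul_of_nonneg_left hratio (pow_nonneg hεpos.le 8)
      have h1ε : ε ^ 8 * (1 / ε) ^ 8 = 1 := by
        rw [← mul_pow, mul_one_div_cancel hεpos.ne', one_pow]
      have hee : ε ^ 8 * ((n.choose w0 : ℝ) * (1 / ε) ^ 8 * K1) = (n.choose w0 : ℝ) * K1 := by
        calc ε ^ 8 * ((n.choose w0 : ℝ) * (1 / ε) ^ 8 * K1)
            = (ε ^ 8 * (1 / ε) ^ 8) * ((n.choose w0 : ℝ) * K1) := by ring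
          _ = (n.choose w0 : ℝ) * K1 := by rw [h1ε, one_mul]
      linarith
    have hc2 : c * (2 * Real.sqrt 2 * K1) ≤ Real.sqrt (Real.log (1 / ε)) := by
      rw [hcdef, div_mul_eq_mul_div, div_le_iff₀ hden]
      have h1 : Real.sqrt (Real.log 2) * (2 * Real.sqrt 2 * K1)
          ≤ Real.sqrt (Real.log (1 / ε)) * (2 * Real.sqrt 2 * K1) :=
        mul_le_mul_of_nonneg_right hslog (by positivity)
      nlinarith [h1, mul_nonneg hslogpos.le (Real.sqrt_nonneg KB)]
    refine le_trans ?_ havg2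
    rw [hσ]
    rw [div_le_div_iff₀ hslogpos (by positivity)]
    have hkey2 : (ε ^ 8 * (n.choose half : ℝ)) * (Real.sqrt n * (n.choose half : ℝ))
        ≤ ((n.choose w0 : ℝ) * K1) * (Real.sqrt 2 * 2 ^ n) :=
      mul_le_mul hp1 hBn (by positivity) (by positivity)
    calc c * ε ^ 8 * σ * Real.sqrt n * (2 * (n.choose half : ℝ) ^ 2)
        = σ * (2 * c) * ((ε ^ 8 * (n.choose half : ℝ))
          * (Real.sqrt n * (n.choose half : ℝ))) := by ring
      _ ≤ σ * (2 * c) * (((n.choose w0 : ℝ) * K1) * (Real.sqrt 2 * 2 ^ n)) := by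
          apply mul_le_mul_of_nonneg_left hkey2 (by positivity)
      _ = σ * 2 ^ n * (n.choose w0 : ℝ) * (c * (2 * Real.sqrt 2 * K1)) := by ring
      _ ≤ σ * 2 ^ n * (n.choose w0 : ℝ) * Real.sqrt (Real.log (1 / ε)) := by
          apply mul_le_mul_of_nonneg_left hc2 (by positivity)
  · -- degenerate case
    have hor : n < 2 * d ∨ n ^ 2 < d ^ 3 := by
      rcases not_and_or.mp hcase with h | h
      · left; omega
      · right; omega
    have hsmall := caseB_bound hnR hεpos hε2 hLdef hdle hor
    rw [← hKBdef] at hsmall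
    refine le_trans ?_ havg1
    have hε8n : ε ^ 8 * Real.sqrt n ≤ Real.sqrt KB := by
      have h1 : ε ^ 8 * Real.sqrt n = Real.sqrt (ε ^ 16 * n) := by
        rw [Real.sqrt_mul (by positivity), show ε ^ 16 = (ε ^ 8) ^ 2 by ring,
          Real.sqrt_sq (by positivity)]
      rw [h1]
      exact Real.sqrt_le_sqrt hsmall
    have hcKB : c * Real.sqrt KB ≤ Real.sqrt (Real.log 2) := by
      rw [hcdef, div_mul_eq_mul_div, div_le_iff₀ hden]
      nlinarith [Real.sqrt_nonneg KB, Real.sqrt_nonneg (Real.log 2),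
        mul_nonneg (Real.sqrt_nonneg (Real.log 2))
          (mul_nonneg (mul_nonneg (by norm_num : (0:ℝ) ≤ 2) hs2pos.le) hK1pos.le)]
    rw [div_le_one hslogpos]
    calc c * ε ^ 8 * σ * Real.sqrt n
        ≤ c * ε ^ 8 * 1 * Real.sqrt n := by
          apply mul_le_mul_of_nonneg_right _ (Real.sqrt_nonneg _)
          exact mul_le_mul_of_nonneg_left hσ1 (by positivity)
      _ = c * (ε ^ 8 * Real.sqrt n) := by ring
      _ ≤ c * Real.sqrt KB := mul_le_mul_of_nonneg_left hε8n hcnn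
      _ ≤ Real.sqrt (Real.log 2) := hcKB
      _ ≤ Real.sqrt (Real.log (1 / ε)) := hslog
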